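/- arXiv:2005.02484 — 2 statements merged into one kernel-verified Lean document; each statement's English description precedes it below -/
import Mathlib

section
/- Every minimal TDS with positive topological entropy is FK-sensitive. -/
open Filter Topology MeasureTheory Set

namespace FKPaper

variable {X : Type*} [MetricSpace X]

/-- The maximal fit of an `(n,δ)`-match between the orbits of `x` and `z` under `T`:
the largest cardinality of the domain of an order-preserving bijection
`π : D → R`, with `D, R ⊆ {0,…,n-1}` and `dist (T^[i] x) (T^[π i] z) < δ` for `i ∈ D`. -/
noncomputable def maxFit (T : X → X) (δ : ℝ) (n : ℕ) (x z : X) : ℕ :=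
  sSup {k : ℕ | ∃ i j : Fin k → ℕ, StrictMono i ∧ StrictMono j ∧
    (∀ s, i s < n) ∧ (∀ s, j s < n) ∧ ∀ s, dist (T^[i s] x) (T^[j s] z) < δ}

/-- `f̄_{n,δ}(x,z) = 1 - (maximal fit of an (n,δ)-match of x and z)/n`. -/
noncomputable def fbarN (T : X → X) (δ : ℝ) (n : ℕ) (x z : X) : ℝ :=
  1 - (maxFit T δ n x z : ℝ) / n

/-- `f̄_δ(x,z) = limsup_{n→∞} f̄_{n,δ}(x,z)`. -/
noncomputable def fbar (T : X → X) (δ : ℝ) (x z : X) : ℝ :=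
  Filter.limsup (fun n => fbarN T δ n x z) Filter.atTop

/-- The Feldman–Katok pseudometric `ρ_FK(x,z) = inf {δ > 0 : f̄_δ(x,z) < δ}`. -/
noncomputable def rhoFK (T : X → X) (x z : X) : ℝ :=
  sInf {δ : ℝ | 0 < δ ∧ fbar T δ x z < δ}

/-- Minimality: every forward orbit is dense. -/
def IsMinimal (T : X → X) : Prop :=
  ∀ x : X, Dense {y : X | ∃ n : ℕ, T^[n] x = y}

/-- FK-sensitivity: some `ε > 0` works for every nonempty open set. -/
def FKSensitive (T : X → X) : Prop :=
  ∃ ε > 0, ∀ U : Set X, IsOpen U → U.Nonempty →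
    ∃ x ∈ U, ∃ y ∈ U, ε < rhoFK T x y

end FKPaper

open FKPaper Filter Topology MeasureTheory Set

namespace FKProof

variable {X : Type*} [MetricSpace X]

/-- The defining set of `maxFit`. -/
def mSet (T : X → X) (δ : ℝ) (n : ℕ) (x z : X) : Set ℕ :=
  {k : ℕ | ∃ i j : Fin k → ℕ, StrictMono i ∧ StrictMono j ∧
    (∀ s, i s < n) ∧ (∀ s, j s < n) ∧ ∀ s, dist (T^[i s] x) (T^[j s] z) < δ}

lemma maxFit_eq_sSup (T : X → X) (δ : ℝ) (n : ℕ) (x z : X) :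
    maxFit T δ n x z = sSup (mSet T δ n x z) := rfl

lemma zero_mem_mSet (T : X → X) (δ : ℝ) (n : ℕ) (x z : X) : 0 ∈ mSet T δ n x z :=
  ⟨Fin.elim0, Fin.elim0, fun s => s.elim0, fun s => s.elim0, fun s => s.elim0,
    fun s => s.elim0, fun s => s.elim0⟩

lemma le_of_mem_mSet {T : X → X} {δ : ℝ} {n : ℕ} {x z : X} {k : ℕ}
    (hk : k ∈ mSet T δ n x z) : k ≤ n := by
  obtain ⟨i, _, hi, _, hin, _, _⟩ := hk
  have : Function.Injective (fun s : Fin k => (⟨i s, hin s⟩ : Fin n)) := by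
    intro a b hab
    exact hi.injective (by simpa using hab)
  simpa using Fintype.card_le_of_injective _ this

lemma bddAbove_mSet (T : X → X) (δ : ℝ) (n : ℕ) (x z : X) : BddAbove (mSet T δ n x z) :=
  ⟨n, fun _ hk => le_of_mem_mSet hk⟩

lemma maxFit_le (T : X → X) (δ : ℝ) (n : ℕ) (x z : X) : maxFit T δ n x z ≤ n :=
  csSup_le ⟨0, zero_mem_mSet T δ n x z⟩ fun _ hk => le_of_mem_mSet hk

lemma maxFit_mem_mSet (T : X → X) (δ : ℝ) (n : ℕ) (x z : X) :
    maxFit T δ n x z ∈ mSet T δ n x z :=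
  Nat.sSup_mem ⟨0, zero_mem_mSet T δ n x z⟩ (bddAbove_mSet T δ n x z)

lemma mem_mSet_of_le {T : X → X} {δ : ℝ} {n : ℕ} {x z : X} {k k' : ℕ}
    (hk : k ∈ mSet T δ n x z) (h : k' ≤ k) : k' ∈ mSet T δ n x z := by
  obtain ⟨i, j, hi, hj, hin, hjn, hd⟩ := hk
  exact ⟨i ∘ Fin.castLE h, j ∘ Fin.castLE h, hi.comp (Fin.strictMono_castLE h),
    hj.comp (Fin.strictMono_castLE h),
    fun s => hin _, fun s => hjn _, fun s => hd _⟩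

lemma fbarN_le_one (T : X → X) (δ : ℝ) (n : ℕ) (x z : X) : fbarN T δ n x z ≤ 1 := by
  have : (0:ℝ) ≤ (maxFit T δ n x z : ℝ) / n := by positivity
  simp only [fbarN]; linarith

/-- For `δ` bigger than the diameter, the full match works. -/
lemma maxFit_eq_n [CompactSpace X] (T : X → X) (x z : X) {n : ℕ} (hn : 1 ≤ n) :
    maxFit T (Metric.diam (univ : Set X) + 1) n x z = n := by
  refine le_antisymm (maxFit_le _ _ _ _ _) (le_csSup (bddAbove_mSet _ _ _ _ _) ?_)
  refine ⟨Fin.val, Fin.val, fun a b hab => hab, fun a b hab => hab,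
    fun s => s.2, fun s => s.2, fun s => ?_⟩
  have h1 : dist (T^[(s:ℕ)] x) (T^[(s:ℕ)] z) ≤ Metric.diam (univ : Set X) :=
    Metric.dist_le_diam_of_mem isCompact_univ.isBounded (mem_univ _) (mem_univ _)
  linarith

lemma rhoSet_nonempty [CompactSpace X] (T : X → X) (x z : X) :
    (Metric.diam (univ : Set X) + 1) ∈ {δ : ℝ | 0 < δ ∧ fbar T δ x z < δ} := by
  have hd : (0:ℝ) ≤ Metric.diam (univ : Set X) := Metric.diam_nonneg
  have hfb : fbar T (Metric.diam (univ : Set X) + 1) x z = 0 := by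
    have hev : ∀ᶠ n : ℕ in atTop,
        fbarN T (Metric.diam (univ : Set X) + 1) n x z = (fun _ : ℕ => (0:ℝ)) n := by
      filter_upwards [eventually_ge_atTop 1] with n hn
      have := maxFit_eq_n T x z hn
      have hn' : (n:ℝ) ≠ 0 := by positivity
      simp [fbarN, this, div_self hn']
    rw [fbar, limsup_congr hev, limsup_const]
  constructor
  · linarith
  · rw [hfb]; linarith

/-- From `rhoFK T x z ≤ ε` extract a useful scale `δ < 2ε`. -/
lemma exists_delta [CompactSpace X] {T : X → X} {x z : X} {ε : ℝ} (hε : 0 < ε)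
    (h : rhoFK T x z ≤ ε) : ∃ δ : ℝ, 0 < δ ∧ δ < 2 * ε ∧ fbar T δ x z < δ := by
  have hbdd : BddBelow {δ : ℝ | 0 < δ ∧ fbar T δ x z < δ} :=
    ⟨0, fun δ hδ => hδ.1.le⟩
  have hne : {δ : ℝ | 0 < δ ∧ fbar T δ x z < δ}.Nonempty :=
    ⟨_, rhoSet_nonempty T x z⟩
  have hlt : sInf {δ : ℝ | 0 < δ ∧ fbar T δ x z < δ} < 2 * ε := by
    calc sInf {δ : ℝ | 0 < δ ∧ fbar T δ x z < δ} = rhoFK T x z := rfl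
    _ ≤ ε := h
    _ < 2 * ε := by linarith
  obtain ⟨δ, hδmem, hδlt⟩ := (csInf_lt_iff hbdd hne).1 hlt
  exact ⟨δ, hδmem.1, hδlt, hδmem.2⟩

/-- The closed "good match at time n" set. -/
def Vset (T : X → X) (z : X) (b : ℝ) (k₀ n : ℕ) : Set X :=
  {x | ∃ i j : Fin k₀ → Fin n, StrictMono i ∧ StrictMono j ∧
    ∀ t, dist (T^[(i t : ℕ)] x) (T^[(j t : ℕ)] z) ≤ b}

lemma isClosed_Vset {T : X → X} (hT : Continuous T) (z : X) (b : ℝ) (k₀ n : ℕ) :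
    IsClosed (Vset T z b k₀ n) := by
  have : Vset T z b k₀ n = ⋃ (p : {q : (Fin k₀ → Fin n) × (Fin k₀ → Fin n) //
      StrictMono q.1 ∧ StrictMono q.2}),
      ⋂ t : Fin k₀, {x | dist (T^[(p.1.1 t : ℕ)] x) (T^[(p.1.2 t : ℕ)] z) ≤ b} := by
    ext x
    simp only [Vset, mem_setOf_eq, mem_iUnion, mem_iInter, mem_setOf_eq]
    constructor
    · rintro ⟨i, j, hi, hj, hd⟩; exact ⟨⟨(i, j), hi, hj⟩, hd⟩
    · rintro ⟨⟨⟨i, j⟩, hi, hj⟩, hd⟩; exact ⟨i, j, hi, hj, hd⟩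
  rw [this]
  refine isClosed_iUnion_of_finite fun p => isClosed_iInter fun t => ?_
  exact isClosed_le (((hT.iterate _).dist continuous_const)) continuous_const

/-- Membership of `Vset` for all large `n`, from smallness of `rhoFK`. -/
lemma eventually_mem_Vset [CompactSpace X] {T : X → X} {x z : X} {ε b : ℝ}
    (hε : 0 < ε) (hε4 : ε ≤ 1/4) (hb : 2 * ε ≤ b) (h : rhoFK T x z ≤ ε) :
    ∃ m : ℕ, ∀ n ≥ m, x ∈ Vset T z b (n - ⌈2 * ε * n⌉₊) n := by
  obtain ⟨δ, hδ0, hδ2, hδfb⟩ := exists_delta hε h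
  have hfb : fbar T δ x z < 2 * ε := lt_trans hδfb hδ2
  have hev : ∀ᶠ n : ℕ in atTop, fbarN T δ n x z < 2 * ε :=
    eventually_lt_of_limsup_lt hfb (isBoundedUnder_of ⟨1, fun n => fbarN_le_one T δ n x z⟩)
  obtain ⟨m₀, hm₀⟩ := (hev.and (eventually_ge_atTop 1)).exists_forall_of_atTop
  refine ⟨m₀, fun n hn => ?_⟩
  obtain ⟨hfbn, hn1⟩ := hm₀ n hn
  set r := ⌈2 * ε * n⌉₊ with hr
  set K := maxFit T δ n x z with hK
  have hnpos : (0:ℝ) < n := by exact_mod_cast hn1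
  have hKgt : (n:ℝ) - 2 * ε * n < K := by
    have : 1 - (K:ℝ) / n < 2 * ε := hfbn
    have h2 : (1 - 2*ε) * n < K := by
      rw [sub_mul, one_mul]
      calc (n:ℝ) - 2*ε*n < (K / n) * n := by
            have : 1 - 2*ε < (K:ℝ)/n := by linarith
            nlinarith
        _ = K := by field_simp
    nlinarith [h2]
  have hrn : r ≤ n := by
    rw [hr]
    exact Nat.ceil_le.2 (by nlinarith)
  have hk₀K : n - r ≤ K := by
    have h1 : ((n - r : ℕ) : ℝ) ≤ (n:ℝ) - 2 * ε * n := by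
      rw [Nat.cast_sub hrn]
      have := Nat.le_ceil (2 * ε * n)
      linarith
    have : ((n - r : ℕ) : ℝ) < (K:ℝ) := lt_of_le_of_lt h1 hKgt
    exact_mod_cast this.le
  obtain ⟨i, j, hi, hj, hin, hjn, hd⟩ := mem_mSet_of_le (maxFit_mem_mSet T δ n x z) hk₀K
  refine ⟨fun t => ⟨i t, hin t⟩, fun t => ⟨j t, hjn t⟩, ?_, ?_, fun t => ?_⟩
  · intro a b' hab; simpa [Fin.lt_def] using hi hab
  · intro a b' hab; simpa [Fin.lt_def] using hj hab
  · exact le_trans (hd t).le (by linarith)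

/-- Baire-category: an open set eventually absorbed pointwise by closed sets contains an
open piece absorbed uniformly. -/
lemma exists_open_subset_iInter [CompactSpace X] {U : Set X} (hU : IsOpen U)
    (hne : U.Nonempty) {V : ℕ → Set X} (hVc : ∀ n, IsClosed (V n))
    (hcov : ∀ x ∈ U, ∃ m : ℕ, ∀ n ≥ m, x ∈ V n) :
    ∃ (O : Set X) (m : ℕ), IsOpen O ∧ O.Nonempty ∧ ∀ n ≥ m, O ⊆ V n := by
  obtain ⟨z, hz⟩ := hne
  obtain ⟨r, hr, hball⟩ := Metric.nhds_basis_closedBall.mem_iff.1 (hU.mem_nhds hz)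
  set K := closure (Metric.ball z r) with hKdef
  have hKU : K ⊆ U := (Metric.closure_ball_subset_closedBall).trans hball
  have hKclosed : IsClosed K := isClosed_closure
  have hKne : (Metric.ball z r).Nonempty := ⟨z, Metric.mem_ball_self hr⟩
  haveI : Nonempty K := ⟨⟨z, subset_closure (Metric.mem_ball_self hr)⟩⟩
  haveI : CompleteSpace K := hKclosed.completeSpace_coe
  set W : ℕ → Set X := fun m => ⋂ n, ⋂ (_ : n ≥ m), V n with hWdef
  have hWclosed : ∀ m, IsClosed (W m) := fun m =>
    isClosed_iInter fun n => isClosed_iInter fun _ => hVc n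
  have hWuniv : (⋃ m, (Subtype.val ⁻¹' (W m) : Set K)) = univ := by
    ext x
    simp only [mem_iUnion, mem_preimage, mem_univ, iff_true]
    obtain ⟨m, hm⟩ := hcov x.1 (hKU x.2)
    exact ⟨m, by simp only [hWdef, mem_iInter]; exact fun n hn => hm n hn⟩
  obtain ⟨m, hm⟩ := nonempty_interior_of_iUnion_of_closed
    (fun m => (hWclosed m).preimage continuous_subtype_val) hWuniv
  obtain ⟨x₀, hx₀⟩ := hm
  have hnhds : (Subtype.val ⁻¹' (W m) : Set K) ∈ nhds x₀ := mem_interior_iff_mem_nhds.1 hx₀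
  rw [nhds_induced] at hnhds
  obtain ⟨t, ht, hsub⟩ := Filter.mem_comap.1 hnhds
  obtain ⟨V₀, hV₀t, hV₀open, hx₀V₀⟩ := mem_nhds_iff.1 ht
  refine ⟨V₀ ∩ Metric.ball z r, m, hV₀open.inter Metric.isOpen_ball, ?_, fun n hn y hy => ?_⟩
  · have hmem : (x₀ : X) ∈ closure (Metric.ball z r) := x₀.2
    rw [mem_closure_iff] at hmem
    obtain ⟨y, hy1, hy2⟩ := hmem V₀ hV₀open hx₀V₀
    exact ⟨y, hy1, hy2⟩
  · have hyK : y ∈ K := subset_closure hy.2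
    have : (⟨y, hyK⟩ : K) ∈ Subtype.val ⁻¹' (W m) := hsub (hV₀t hy.1)
    simp only [mem_preimage, hWdef, mem_iInter] at this
    exact this n hn

/-- Minimality gives a uniform return time into any nonempty open set. -/
lemma exists_return_bound [CompactSpace X] [Nonempty X] {T : X → X} (hT : Continuous T)
    (hmin : IsMinimal T) {O : Set X} (hO : IsOpen O) (hne : O.Nonempty) :
    ∃ N : ℕ, 1 ≤ N ∧ ∀ x : X, ∃ k < N, T^[k] x ∈ O := by
  have hcover : (univ : Set X) ⊆ ⋃ k : ℕ, T^[k] ⁻¹' O := by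
    intro x _
    obtain ⟨y, ⟨k, hk⟩, hyO⟩ := (hmin x).exists_mem_open hO hne
    exact mem_iUnion.2 ⟨k, by simp [mem_preimage, hk, hyO]⟩
  obtain ⟨t, ht⟩ := isCompact_univ.elim_finite_subcover _
    (fun k : ℕ => (hO.preimage (hT.iterate k))) hcover
  refine ⟨t.sup id + 1, le_add_self, fun x => ?_⟩
  obtain ⟨k, hkt, hk⟩ := mem_iUnion₂.1 (ht (mem_univ x))
  exact ⟨k, Nat.lt_succ_of_le (Finset.le_sup (f := id) hkt), hk⟩

section Cover

variable [CompactSpace X] [Nonempty X]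

open Dynamics in
/-- The key counting estimate: if every point returns into `O` within time `N`, and every
point of `O` admits a `(β/3, k₀)`-match with the orbit of `z`, then dynamical `β`-covers of the
whole space at time `n` have controlled cardinality. -/
lemma cover_bound (T : X → X) (z : X) {β : ℝ} (hβ : 0 < β)
    (S : Finset X) (hS : ∀ x : X, ∃ y ∈ S, dist x y < β/3)
    {O : Set X} {N : ℕ} (hN : ∀ x : X, ∃ k < N, T^[k] x ∈ O)
    {k₀ n : ℕ} (hk₀n : k₀ ≤ n) (hO : O ⊆ Vset T z (β/3) k₀ n) :
    coverMincard T univ {p : X × X | dist p.1 p.2 < β} n ≤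
      (N * (n.choose k₀)^2 * S.card^(N + (n - k₀)) : ℕ) := by
  classical
  have hN1 : 0 < N := by
    obtain ⟨k, hk, -⟩ := hN (Classical.arbitrary X)
    omega
  -- the spanning map
  have hσex : ∀ x : X, ∃ y : S, dist x (y : X) < β/3 := by
    intro x; obtain ⟨y, hy, hd⟩ := hS x; exact ⟨⟨y, hy⟩, hd⟩
  set σ : X → S := fun x => (hσex x).choose with hσdef
  have hσ : ∀ x : X, dist x (σ x : X) < β/3 := fun x => (hσex x).choose_spec
  -- the code type
  set Mn := {f : Fin k₀ → Fin n // StrictMono f} with hMndef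
  letI : Fintype Mn := Fintype.ofFinite Mn
  -- enumeration of the complement of the range of a strictly monotone map
  have hcard : ∀ i : Mn, (Finset.image i.1 Finset.univ)ᶜ.card = n - k₀ := by
    intro i
    rw [Finset.card_compl, Finset.card_image_of_injective _ i.2.injective,
      Finset.card_univ, Fintype.card_fin, Fintype.card_fin]
  set e : (i : Mn) → Fin (n - k₀) → Fin n :=
    fun i => ((Finset.image i.1 Finset.univ)ᶜ).orderEmbOfFin (hcard i) with hedef
  set Γ := Fin N × Mn × Mn × (Fin N → S) × (Fin (n - k₀) → S) with hΓdef
  set P : Γ → X → Prop := fun γ x =>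
    (∀ t : Fin k₀, dist (T^[(γ.2.1.1 t : ℕ) + (γ.1 : ℕ)] x) (T^[(γ.2.2.1.1 t : ℕ)] z) ≤ β/3) ∧
    (∀ t : Fin N, dist (T^[(t : ℕ)] x) ((γ.2.2.2.1 t : X)) < β/3) ∧
    (∀ t : Fin (n - k₀), dist (T^[(e γ.2.1 t : ℕ) + (γ.1 : ℕ)] x) ((γ.2.2.2.2 t : X)) < β/3)
    with hPdef
  have hcode : ∀ x : X, ∃ γ : Γ, P γ x := by
    intro x
    obtain ⟨k, hkN, hkO⟩ := hN x
    obtain ⟨i, j, hi, hj, hd⟩ := hO hkO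
    refine ⟨⟨⟨k, hkN⟩, ⟨i, hi⟩, ⟨j, hj⟩, fun t => σ (T^[(t : ℕ)] x),
      fun t => σ (T^[(e ⟨i, hi⟩ t : ℕ) + k] x)⟩, ?_, ?_, ?_⟩
    · intro t
      simpa [Function.iterate_add_apply] using hd t
    · intro t; exact hσ _
    · intro t; exact hσ _
  have hclose : ∀ (γ : Γ) (x y : X), P γ x → P γ y →
      ∀ l < n, dist (T^[l] x) (T^[l] y) < β := by
    rintro ⟨k, i, j, u, v⟩ x y ⟨hAx, hBx, hCx⟩ ⟨hAy, hBy, hCy⟩ l hln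
    by_cases hlk : l < (k : ℕ)
    · have hlN : l < N := lt_trans hlk k.2
      have hx := hBx ⟨l, hlN⟩
      have hy := hBy ⟨l, hlN⟩
      calc dist (T^[l] x) (T^[l] y)
          ≤ dist (T^[l] x) ((u ⟨l, hlN⟩ : X)) + dist (T^[l] y) ((u ⟨l, hlN⟩ : X)) :=
            dist_triangle_right _ _ _
        _ < β := by linarith
    · push_neg at hlk
      set l' := l - (k : ℕ) with hl'def
      have hl'n : l' < n := lt_of_le_of_lt (Nat.sub_le l _) hln
      have hlk' : l' + (k : ℕ) = l := Nat.sub_add_cancel hlk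
      set l'' : Fin n := ⟨l', hl'n⟩ with hl''def
      by_cases hmem : l'' ∈ Finset.image i.1 Finset.univ
      · obtain ⟨t, -, ht⟩ := Finset.mem_image.1 hmem
        have hcast : (i.1 t : ℕ) = l' := by rw [ht]
        have hx := hAx t
        have hy := hAy t
        rw [hcast, hlk'] at hx hy
        calc dist (T^[l] x) (T^[l] y)
            ≤ dist (T^[l] x) (T^[(j.1 t : ℕ)] z) + dist (T^[(j.1 t : ℕ)] z) (T^[l] y) :=
              dist_triangle _ _ _
          _ ≤ β/3 + β/3 := by rw [dist_comm (T^[(j.1 t : ℕ)] z)]; exact add_le_add hx hy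
          _ < β := by linarith
      · have hmem' : l'' ∈ (Finset.image i.1 Finset.univ)ᶜ := Finset.mem_compl.2 hmem
        have hrange : (l'' : Fin n) ∈ Set.range (e i) := by
          rw [hedef, Finset.range_orderEmbOfFin]
          exact hmem'
        obtain ⟨t, ht⟩ := hrange
        have hcast : (e i t : ℕ) = l' := by rw [ht]
        have hx := hCx t
        have hy := hCy t
        rw [hcast, hlk'] at hx hy
        calc dist (T^[l] x) (T^[l] y)
            ≤ dist (T^[l] x) ((v t : X)) + dist (T^[l] y) ((v t : X)) :=
              dist_triangle_right _ _ _
          _ < β := by linarith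
  -- build the cover
  set code : X → Γ := fun x => (hcode x).choose with hcodedef
  have hcodeP : ∀ x : X, P (code x) x := fun x => (hcode x).choose_spec
  set rep : Γ → X := fun γ => if h : ∃ x, code x = γ then h.choose else Classical.arbitrary X
    with hrepdef
  set s : Finset X := Finset.image rep Finset.univ with hsdef
  have hcover : IsDynCoverOf T univ {p : X × X | dist p.1 p.2 < β} n ↑s := by
    intro x _
    have hex : ∃ y, code y = code x := ⟨x, rfl⟩
    have hrepx : rep (code x) = hex.choose := by rw [hrepdef]; exact dif_pos hex
    have hPrep : P (code x) (rep (code x)) := by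
      rw [hrepx]
      have := hcodeP hex.choose
      rwa [hex.choose_spec] at this
    refine ⟨rep (code x), ?_, ?_⟩
    · exact Finset.mem_coe.2 (Finset.mem_image.2 ⟨code x, Finset.mem_univ _, rfl⟩)
    · show (x, rep (code x)) ∈ dynEntourage T {p : X × X | dist p.1 p.2 < β} n
      rw [mem_dynEntourage]
      intro l hl
      exact hclose (code x) x (rep (code x)) (hcodeP x) hPrep l hl
  have hmincard := hcover.coverMincard_le_card
  -- cardinality estimates
  have hMncard : Fintype.card Mn ≤ n.choose k₀ := by
    have hinj : Function.Injective
        (fun f : Mn => (⟨Finset.image f.1 Finset.univ, by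
          rw [Finset.mem_powersetCard]
          exact ⟨Finset.subset_univ _, by
            rw [Finset.card_image_of_injective _ f.2.injective, Finset.card_univ,
              Fintype.card_fin]⟩⟩ :
          {A : Finset (Fin n) // A ∈ Finset.powersetCard k₀ Finset.univ})) := by
      intro f g hfg
      simp only [Subtype.mk_eq_mk] at hfg
      have hcardf : (Finset.image f.1 Finset.univ).card = k₀ := by
        rw [Finset.card_image_of_injective _ f.2.injective, Finset.card_univ, Fintype.card_fin]
      have hf := Finset.orderEmbOfFin_unique hcardf
        (fun t => Finset.mem_image.2 ⟨t, Finset.mem_univ _, rfl⟩) f.2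
      have hg := Finset.orderEmbOfFin_unique hcardf
        (fun t => by rw [hfg]; exact Finset.mem_image.2 ⟨t, Finset.mem_univ _, rfl⟩) g.2
      exact Subtype.ext (hf.trans hg.symm)
    calc Fintype.card Mn ≤ Fintype.card {A : Finset (Fin n) // A ∈ Finset.powersetCard k₀
          (Finset.univ : Finset (Fin n))} := Fintype.card_le_of_injective _ hinj
      _ = (Finset.powersetCard k₀ (Finset.univ : Finset (Fin n))).card := Fintype.card_coe _
      _ = n.choose k₀ := by rw [Finset.card_powersetCard, Finset.card_univ, Fintype.card_fin]
  have hscard : s.card ≤ N * (n.choose k₀)^2 * S.card^(N + (n - k₀)) := by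
    calc s.card ≤ Finset.univ.card := Finset.card_image_le.trans (le_of_eq rfl)
      _ = Fintype.card Γ := Finset.card_univ
      _ = N * (Fintype.card Mn * (Fintype.card Mn * (S.card^N * S.card^(n - k₀)))) := by
          show Fintype.card (Fin N × Mn × Mn × (Fin N → {x // x ∈ S}) ×
            (Fin (n - k₀) → {x // x ∈ S})) = _
          simp [Fintype.card_fun]
      _ ≤ N * ((n.choose k₀) * ((n.choose k₀) * (S.card^N * S.card^(n - k₀)))) := by
          gcongr
      _ = N * (n.choose k₀)^2 * S.card^(N + (n - k₀)) := by ring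
  calc coverMincard T univ {p : X × X | dist p.1 p.2 < β} n ≤ (s.card : ℕ∞) := hmincard
    _ ≤ ((N * (n.choose k₀)^2 * S.card^(N + (n - k₀)) : ℕ) : ℕ∞) := by
        exact_mod_cast hscard

end Cover

section Analytic

/-- `(k/3)^k ≤ k!` over the reals. -/
lemma pow_div_three_le_factorial : ∀ k : ℕ, ((k:ℝ)/3)^k ≤ (k.factorial : ℝ) := by
  intro k
  induction k with
  | zero => simp
  | succ k ih =>
    rcases Nat.eq_zero_or_pos k with rfl | hk
    · norm_num
    have hk' : (0:ℝ) < k := by exact_mod_cast hk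
    have hexp : ((k:ℝ)+1)/(k:ℝ) ≤ Real.exp (1/(k:ℝ)) := by
      have := Real.add_one_le_exp (1/(k:ℝ))
      have heq : ((k:ℝ)+1)/(k:ℝ) = 1/(k:ℝ) + 1 := by field_simp; ring
      rw [heq]; exact this
    have hpow : (((k:ℝ)+1)/(k:ℝ))^k ≤ 3 := by
      calc (((k:ℝ)+1)/(k:ℝ))^k ≤ (Real.exp (1/(k:ℝ)))^k := by
            apply pow_le_pow_left₀ (by positivity) hexp
        _ = Real.exp ((k:ℕ) * (1/(k:ℝ))) := (Real.exp_nat_mul _ k).symm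
        _ = Real.exp 1 := by
            congr 1
            field_simp
        _ ≤ 3 := by
            have := Real.exp_one_lt_d9
            linarith
    have hstep : (((k:ℝ)+1)/3)^(k+1) ≤ ((k:ℝ)+1) * ((k:ℝ)/3)^k := by
      have hsplit : (((k:ℝ)+1)/3)^(k+1) = (((k:ℝ)+1)/3) * ((((k:ℝ)+1)/3)^k) := by
        rw [pow_succ]; ring
      have hfac : (((k:ℝ)+1)/3)^k = ((k:ℝ)/3)^k * ((((k:ℝ)+1)/(k:ℝ)))^k := by
        rw [← mul_pow]
        congr 1
        field_simp
      rw [hsplit, hfac]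
      have h1 : (((k:ℝ)+1)/3) * (((k:ℝ)/3)^k * ((((k:ℝ)+1)/(k:ℝ)))^k)
          ≤ (((k:ℝ)+1)/3) * (((k:ℝ)/3)^k * 3) := by
        apply mul_le_mul_of_nonneg_left _ (by positivity)
        apply mul_le_mul_of_nonneg_left hpow (by positivity)
      calc (((k:ℝ)+1)/3) * (((k:ℝ)/3)^k * ((((k:ℝ)+1)/(k:ℝ)))^k)
          ≤ (((k:ℝ)+1)/3) * (((k:ℝ)/3)^k * 3) := h1
        _ = ((k:ℝ)+1) * ((k:ℝ)/3)^k := by ring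
    calc (((k+1:ℕ):ℝ)/3)^(k+1) = (((k:ℝ)+1)/3)^(k+1) := by push_cast; ring_nf
      _ ≤ ((k:ℝ)+1) * ((k:ℝ)/3)^k := hstep
      _ ≤ ((k:ℝ)+1) * (k.factorial : ℝ) := by
          apply mul_le_mul_of_nonneg_left ih (by positivity)
      _ = ((k+1).factorial : ℝ) := by
          rw [Nat.factorial_succ]; push_cast; ring

/-- `log x ≤ 2 √x` for positive `x`. -/
lemma log_le_two_sqrt {x : ℝ} (hx : 0 < x) : Real.log x ≤ 2 * Real.sqrt x := by
  have h1 : Real.log (Real.sqrt x) ≤ Real.sqrt x - 1 :=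
    Real.log_le_sub_one_of_pos (Real.sqrt_pos.2 hx)
  have h2 : Real.log x = 2 * Real.log (Real.sqrt x) := by
    rw [Real.log_sqrt hx.le]; ring
  nlinarith [Real.sqrt_nonneg x]

/-- Choice of a suitable `ε`. -/
lemma exists_eps {β c : ℝ} (hβ : 0 < β) (hc : 0 < c) (C : ℕ) (hC : 1 ≤ C) :
    ∃ ε : ℝ, 0 < ε ∧ ε ≤ 1/4 ∧ ε ≤ β/6 ∧
      2*ε*(2*Real.log (3/(2*ε)) + Real.log C) < c := by
  set L := Real.log C with hLdef
  have hL0 : 0 ≤ L := Real.log_nonneg (by exact_mod_cast hC)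
  set ε := min (β/6) (min (1/4) (min (c^2/400) (c/(8*(L+1))))) with hεdef
  have hε0 : 0 < ε := by
    apply lt_min (by positivity)
    exact lt_min (by norm_num) (lt_min (by positivity) (by positivity))
  have hε14 : ε ≤ 1/4 := le_trans (min_le_right _ _) (min_le_left _ _)
  have hεβ : ε ≤ β/6 := min_le_left _ _
  have hεc2 : ε ≤ c^2/400 :=
    le_trans (min_le_right _ _) (le_trans (min_le_right _ _) (min_le_left _ _))
  have hεcL : ε ≤ c/(8*(L+1)) :=
    le_trans (min_le_right _ _) (le_trans (min_le_right _ _) (min_le_right _ _))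
  refine ⟨ε, hε0, hε14, hεβ, ?_⟩
  set Q := 3/(2*ε) with hQdef
  have hQ0 : 0 < Q := by positivity
  have hlogQ : Real.log Q ≤ 2 * Real.sqrt Q := log_le_two_sqrt hQ0
  have hsq : ε * Real.sqrt Q = Real.sqrt (3*ε/2) := by
    rw [← Real.sqrt_sq hε0.le, ← Real.sqrt_mul (by positivity)]
    congr 1
    rw [hQdef]
    field_simp
    ring
    exact (Real.sqrt_sq hε0.le).symm
  have hsqle : Real.sqrt (3*ε/2) ≤ c/16 := by
    have h1 : 3*ε/2 ≤ (c/16)^2 := by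
      have : 3*(c^2/400)/2 ≤ c^2/256 := by nlinarith
      nlinarith
    calc Real.sqrt (3*ε/2) ≤ Real.sqrt ((c/16)^2) := Real.sqrt_le_sqrt h1
      _ = c/16 := Real.sqrt_sq (by positivity)
  have hterm1 : 2*ε*(2*Real.log Q) ≤ c/2 := by
    have h1 : 2*ε*(2*Real.log Q) ≤ 2*ε*(2*(2*Real.sqrt Q)) := by
      apply mul_le_mul_of_nonneg_left _ (by positivity)
      linarith
    have h2 : 2*ε*(2*(2*Real.sqrt Q)) = 8*(ε*Real.sqrt Q) := by ring
    rw [h2, hsq] at h1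
    linarith
  have hterm2 : 2*ε*L ≤ c/4 := by
    have h1 : 2*ε*L ≤ 2*(c/(8*(L+1)))*L := by
      apply mul_le_mul_of_nonneg_right _ hL0
      linarith
    have h2 : 2*(c/(8*(L+1)))*L ≤ c/4 := by
      rw [show 2*(c/(8*(L+1)))*L = (c*L)/(4*(L+1)) by field_simp; ring]
      rw [div_le_div_iff₀ (by positivity) (by norm_num)]
      nlinarith
    linarith
  have : 2*ε*(2*Real.log Q + L) = 2*ε*(2*Real.log Q) + 2*ε*L := by ring
  rw [this]
  linarith

/-- The eventual growth estimate. -/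
lemma eventually_growth {c ε : ℝ} {C N : ℕ} (hc : 0 < c) (hε : 0 < ε) (hε4 : ε ≤ 1/4)
    (hC : 1 ≤ C) (hN : 1 ≤ N)
    (hkey : 2*ε*(2*Real.log (3/(2*ε)) + Real.log C) < c) :
    ∀ᶠ n : ℕ in atTop,
      ((N * (n.choose ⌈2*ε*(n:ℝ)⌉₊)^2 * C^(N + ⌈2*ε*(n:ℝ)⌉₊) : ℕ) : ℝ) ≤ Real.exp (c*n) := by
  set Q := 3/(2*ε) with hQdef
  set LQ := Real.log Q with hLQdef
  set L := Real.log C with hLdef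
  have hQ1 : (1:ℝ) ≤ Q := by
    rw [hQdef, le_div_iff₀ (by positivity)]
    linarith
  have hQ0 : 0 < Q := by positivity
  have hLQ0 : 0 ≤ LQ := Real.log_nonneg hQ1
  have hL0 : 0 ≤ L := Real.log_nonneg (by exact_mod_cast hC)
  have ha : 0 < c - 2*ε*(2*LQ + L) := by
    have : 2*ε*(2*LQ + L) = 2*ε*(2*Real.log Q + Real.log C) := by rw [hLQdef, hLdef]
    linarith [hkey]
  set a := c - 2*ε*(2*LQ + L) with hadef
  set D := Real.log N + (N:ℝ)*L + (2*LQ + L) with hDdef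
  filter_upwards [eventually_ge_atTop (max 1 ⌈D/a⌉₊)] with n hn
  have hn1 : 1 ≤ n := le_trans (le_max_left _ _) hn
  have hn1R : (1:ℝ) ≤ (n:ℝ) := by exact_mod_cast hn1
  have hnD : D ≤ a * n := by
    have h1 : (⌈D/a⌉₊ : ℝ) ≤ n := by
      exact_mod_cast le_trans (le_max_right 1 ⌈D/a⌉₊) hn
    have h2 : D/a ≤ n := le_trans (Nat.le_ceil _) h1
    calc D = (D/a) * a := by field_simp
      _ ≤ (n:ℝ) * a := mul_le_mul_of_nonneg_right h2 ha.le
      _ = a * n := by ring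
  set r := ⌈2*ε*(n:ℝ)⌉₊ with hrdef
  have hr1 : 1 ≤ r := Nat.ceil_pos.2 (by positivity)
  have hr1R : (1:ℝ) ≤ (r:ℝ) := by exact_mod_cast hr1
  have hrge : 2*ε*(n:ℝ) ≤ r := Nat.le_ceil _
  have hrle : (r:ℝ) ≤ 2*ε*n + 1 := by
    have := Nat.ceil_lt_add_one (show (0:ℝ) ≤ 2*ε*n by positivity)
    linarith
  -- the binomial bound
  have hchoose : (n.choose r : ℝ) ≤ Q^r := by
    have h1 : (n.choose r : ℝ) ≤ (n:ℝ)^r / (r.factorial : ℝ) := Nat.choose_le_pow_div r n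
    have h2 : ((r:ℝ)/3)^r ≤ (r.factorial : ℝ) := pow_div_three_le_factorial r
    have h3 : (0:ℝ) < ((r:ℝ)/3)^r := by positivity
    have h4 : (n:ℝ)^r / (r.factorial : ℝ) ≤ (n:ℝ)^r / ((r:ℝ)/3)^r :=
      div_le_div_of_nonneg_left (by positivity) h3 h2
    have h5 : (n:ℝ)^r / ((r:ℝ)/3)^r = ((n:ℝ)/((r:ℝ)/3))^r := (div_pow _ _ _).symm
    have h6 : (n:ℝ)/((r:ℝ)/3) = 3*n/r := by
      field_simp
    have h7 : 3*(n:ℝ)/r ≤ Q := by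
      rw [hQdef, div_le_div_iff₀ (by positivity) (by positivity)]
      nlinarith
    have h8 : ((n:ℝ)/((r:ℝ)/3))^r ≤ Q^r := by
      apply pow_le_pow_left₀ (by positivity) (h6 ▸ h7)
    calc (n.choose r : ℝ) ≤ (n:ℝ)^r / (r.factorial : ℝ) := h1
      _ ≤ (n:ℝ)^r / ((r:ℝ)/3)^r := h4
      _ = ((n:ℝ)/((r:ℝ)/3))^r := h5
      _ ≤ Q^r := h8
  -- put everything together
  have hG : ((N * (n.choose r)^2 * C^(N + r) : ℕ) : ℝ)
      ≤ (N:ℝ) * (Q^r)^2 * (C:ℝ)^(N + r) := by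
    push_cast
    gcongr
  have hN0R : (0:ℝ) < (N:ℝ) := by exact_mod_cast hN
  have hQexp : (Q^r)^2 = Real.exp ((2*(r:ℝ)) * LQ) := by
    rw [← pow_mul, hLQdef,
      show (2*(r:ℝ)) * Real.log Q = ((r*2 : ℕ):ℝ) * Real.log Q by push_cast; ring,
      ← Real.log_pow, Real.exp_log (pow_pos hQ0 _)]
  have hC0 : (0:ℝ) < (C:ℝ) := by exact_mod_cast hC
  have hCexp : (C:ℝ)^(N + r) = Real.exp (((N:ℝ) + r) * L) := by
    rw [hLdef,
      show ((N:ℝ) + r) * Real.log C = ((N + r : ℕ):ℝ) * Real.log C by push_cast; ring,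
      ← Real.log_pow, Real.exp_log (pow_pos hC0 _)]
  have hsum : Real.log N + (2*(r:ℝ)) * LQ + ((N:ℝ) + r) * L ≤ c * n := by
    have e1 : 2*(r:ℝ)*LQ ≤ (4*ε*(n:ℝ)+2)*LQ :=
      mul_le_mul_of_nonneg_right (by linarith) hLQ0
    have e2 : ((N:ℝ)+r)*L ≤ ((N:ℝ)+(2*ε*n+1))*L :=
      mul_le_mul_of_nonneg_right (by linarith) hL0
    have e3 : Real.log N + (4*ε*(n:ℝ)+2)*LQ + ((N:ℝ)+(2*ε*n+1))*L
        = D + (2*ε*(2*LQ+L))*(n:ℝ) := by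
      rw [hDdef]; ring
    have e4 : a*(n:ℝ) + (2*ε*(2*LQ+L))*(n:ℝ) = c*(n:ℝ) := by rw [hadef]; ring
    linarith [e1, e2, e3, e4, hnD]
  calc ((N * (n.choose r)^2 * C^(N + r) : ℕ) : ℝ)
      ≤ (N:ℝ) * (Q^r)^2 * (C:ℝ)^(N + r) := hG
    _ = Real.exp (Real.log N + (2*(r:ℝ)) * LQ + ((N:ℝ) + r) * L) := by
        rw [hQexp, hCexp, Real.exp_add, Real.exp_add, Real.exp_log hN0R]
    _ ≤ Real.exp (c*n) := Real.exp_le_exp.2 hsum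

end Analytic

open Dynamics ENNReal EReal in
/-- From an eventual bound on `coverMincard` of subexponential type, bound the
entourage entropy. -/
lemma coverEntropyEntourage_le_of_bound {Y : Type*} [MetricSpace Y] (T : Y → Y) (F : Set Y)
    (E : Set (Y × Y)) {c : ℝ} {G : ℕ → ℕ}
    (hev : ∀ᶠ n : ℕ in atTop, coverMincard T F E n ≤ (G n : ℕ∞))
    (hG : ∀ᶠ n : ℕ in atTop, ((G n : ℕ) : ℝ) ≤ Real.exp (c*n)) :
    coverEntropyEntourage T F E ≤ (c : EReal) := by
  refine limsup_le_of_le isCobounded_le_of_bot ?_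
  filter_upwards [hev, hG, eventually_ge_atTop 1] with n h1 h2 hn1
  have hnR : (0:ℝ) < (n:ℝ) := by exact_mod_cast hn1
  have hm : ((coverMincard T F E n : ℕ∞) : ℝ≥0∞) ≤ ENNReal.ofReal (Real.exp (c*n)) := by
    calc ((coverMincard T F E n : ℕ∞) : ℝ≥0∞) ≤ ((G n : ℕ∞) : ℝ≥0∞) := ENat.toENNReal_le.2 h1
      _ = ((G n : ℕ) : ℝ≥0∞) := by simp
      _ = ENNReal.ofReal ((G n : ℕ) : ℝ) := (ENNReal.ofReal_natCast _).symm
      _ ≤ ENNReal.ofReal (Real.exp (c*n)) := ENNReal.ofReal_le_ofReal h2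
  have hlog : log (coverMincard T F E n) ≤ ((c*(n:ℝ) : ℝ) : EReal) := by
    calc log (coverMincard T F E n) ≤ log (ENNReal.ofReal (Real.exp (c*n))) := log_monotone hm
      _ = ((Real.log (Real.exp (c*n)) : ℝ) : EReal) := log_ofReal_of_pos (Real.exp_pos _)
      _ = ((c*(n:ℝ) : ℝ) : EReal) := by rw [Real.log_exp]
  calc log (coverMincard T F E n) / (n : EReal)
      ≤ ((c*(n:ℝ) : ℝ) : EReal) / (n : EReal) :=
        monotone_div_right_of_nonneg (Nat.cast_nonneg' n) hlog
    _ = (c : EReal) := by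
        rw [← coe_coe_eq_natCast, ← EReal.coe_div, mul_div_assoc,
          div_self hnR.ne', mul_one]

end FKProof

open FKProof


/-- every minimal TDS with positive topological entropy is FK-sensitive. -/
theorem fkSensitive_of_minimal_posEntropy {X : Type*} [MetricSpace X] [CompactSpace X] [Nonempty X]
    (T : X → X) (hT : Continuous T)
    (hmin : IsMinimal T) (hent : 0 < Dynamics.coverEntropy T Set.univ) :
    FKSensitive T := by
  classical
  by_contra hFK
  rw [FKSensitive] at hFK
  push_neg at hFK
  -- extract an entourage with positive entropy, of metric type
  rw [Dynamics.coverEntropy] at hent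
  rw [lt_iSup_iff] at hent
  obtain ⟨U₀, hent⟩ := hent
  rw [lt_iSup_iff] at hent
  obtain ⟨hU₀uni, hU₀pos⟩ := hent
  obtain ⟨β, hβ0, hβsub⟩ := Metric.mem_uniformity_dist.1 hU₀uni
  set E : Set (X × X) := {p : X × X | dist p.1 p.2 < β} with hEdef
  have hEsub : E ⊆ U₀ := fun p hp => hβsub hp
  have hEpos : 0 < Dynamics.coverEntropyEntourage T univ E :=
    lt_of_lt_of_le hU₀pos (Dynamics.coverEntropyEntourage_antitone T univ hEsub)
  -- pick a real 0 < c below the entropy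
  obtain ⟨c', hc'0, hc'E⟩ := exists_between hEpos
  have hc'bot : c' ≠ ⊥ := fun h => by simp [h] at hc'0
  have hc'top : c' ≠ ⊤ := (lt_of_lt_of_le hc'E le_top).ne
  set c := c'.toReal with hcdef
  have hc'eq : (c : EReal) = c' := EReal.coe_toReal hc'top hc'bot
  have hc0 : 0 < c := by
    have := hc'0
    rw [← hc'eq] at this
    exact_mod_cast this
  -- a finite β/3-spanning set
  obtain ⟨t, htfin, htcov⟩ := (Metric.totallyBounded_iff.1 (isCompact_univ (X := X)).totallyBounded)
    (β/3) (by positivity)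
  set S : Finset X := htfin.toFinset with hSdef
  have hS : ∀ x : X, ∃ y ∈ S, dist x y < β/3 := by
    intro x
    obtain ⟨y, hy⟩ := mem_iUnion₂.1 (htcov (mem_univ x))
    exact ⟨y, htfin.mem_toFinset.2 hy.1, Metric.mem_ball.1 hy.2⟩
  have hC1 : 1 ≤ S.card := by
    obtain ⟨y, hy, -⟩ := hS (Classical.arbitrary X)
    exact Finset.card_pos.2 ⟨y, hy⟩
  -- choose ε
  obtain ⟨ε, hε0, hε14, hεβ, hεkey⟩ := exists_eps hβ0 hc0 S.card hC1
  -- the open set with small FK diameter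
  obtain ⟨U, hUopen, hUne, hUsmall⟩ := hFK ε hε0
  obtain ⟨z, hz⟩ := hUne
  -- Baire category step
  have hVclosed : ∀ n : ℕ, IsClosed (Vset T z (β/3) (n - ⌈2*ε*(n:ℝ)⌉₊) n) :=
    fun n => isClosed_Vset hT z (β/3) _ n
  have hcov : ∀ x ∈ U, ∃ m : ℕ, ∀ n ≥ m, x ∈ Vset T z (β/3) (n - ⌈2*ε*(n:ℝ)⌉₊) n := by
    intro x hx
    exact eventually_mem_Vset hε0 hε14 (by linarith) (hUsmall x hx z hz)
  obtain ⟨O, m, hOopen, hOne, hOsub⟩ :=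
    exists_open_subset_iInter hUopen ⟨z, hz⟩ hVclosed hcov
  -- minimality step
  obtain ⟨N, hN1, hN⟩ := exists_return_bound hT hmin hOopen hOne
  -- the counting bound
  have hmincard : ∀ᶠ n : ℕ in atTop, Dynamics.coverMincard T univ E n ≤
      ((N * (n.choose ⌈2*ε*(n:ℝ)⌉₊)^2 * S.card^(N + ⌈2*ε*(n:ℝ)⌉₊) : ℕ) : ℕ∞) := by
    filter_upwards [eventually_ge_atTop (max m 1)] with n hn
    have hnm : n ≥ m := le_trans (le_max_left _ _) hn
    have hn1 : 1 ≤ n := le_trans (le_max_right _ _) hn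
    set r := ⌈2*ε*(n:ℝ)⌉₊ with hrdef
    have hrn : r ≤ n := by
      rw [hrdef]
      apply Nat.ceil_le.2
      have : 2*ε ≤ 1 := by linarith
      nlinarith [Nat.cast_nonneg (α := ℝ) n]
    have hbound := cover_bound T z hβ0 S hS hN (Nat.sub_le n r) (hOsub n hnm)
    have hsymm : n.choose (n - r) = n.choose r := Nat.choose_symm hrn
    have hsub : n - (n - r) = r := Nat.sub_sub_self hrn
    rw [hsymm, hsub] at hbound
    exact hbound
  -- growth estimate
  have hgrowth := eventually_growth hc0 hε0 hε14 hC1 hN1 hεkey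
  have hfinal : Dynamics.coverEntropyEntourage T univ E ≤ (c : EReal) :=
    coverEntropyEntourage_le_of_bound T univ E hmincard hgrowth
  rw [hc'eq] at hfinal
  exact absurd (lt_of_lt_of_le hc'E hfinal) (lt_irrefl c')
end

section
/- Every regular extension of a topologically loosely Kronecker system is topologically loosely Kronecker: let (Y,S) be a topologically loosely Kronecker TDS with unique S-invariant Borel probability measure ν (which exists since such systems are uniquely ergodic), let (X,T) be a TDS, and let φ : X → Y be a continuous surjection with φ ∘ T = S ∘ φ such that ν({y ∈ Y : φ^{-1}({y}) is a singleton}) = 1. Then (X,T) is topologically loosely Kronecker. -/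
open Filter Topology MeasureTheory Set

namespace FKAux
open FKPaper

open FKPaper

variable {X : Type*} [MetricSpace X]

def matchSet (T : X → X) (δ : ℝ) (n : ℕ) (x z : X) : Set ℕ :=
  {k : ℕ | ∃ i j : Fin k → ℕ, StrictMono i ∧ StrictMono j ∧
    (∀ s, i s < n) ∧ (∀ s, j s < n) ∧ ∀ s, dist (T^[i s] x) (T^[j s] z) < δ}

lemma maxFit_def (T : X → X) (δ : ℝ) (n : ℕ) (x z : X) :
    maxFit T δ n x z = sSup (matchSet T δ n x z) := rfl

lemma zero_mem_matchSet (T : X → X) (δ : ℝ) (n : ℕ) (x z : X) :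
    0 ∈ matchSet T δ n x z :=
  ⟨Fin.elim0, Fin.elim0, fun a => a.elim0, fun a => a.elim0,
    fun a => a.elim0, fun a => a.elim0, fun a => a.elim0⟩

lemma strictMono_fin_le {k : ℕ} {i : Fin k → ℕ} (hi : StrictMono i) :
    ∀ m (h : m < k), m ≤ i ⟨m, h⟩ := by
  intro m
  induction m with
  | zero => intro h; exact Nat.zero_le _
  | succ m ih =>
    intro h
    have h' : m < k := Nat.lt_of_succ_lt h
    have : i ⟨m, h'⟩ < i ⟨m + 1, h⟩ := hi (by simp [Fin.lt_def])
    have := ih h'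
    omega

lemma mem_matchSet_le {T : X → X} {δ : ℝ} {n k : ℕ} {x z : X}
    (hk : k ∈ matchSet T δ n x z) : k ≤ n := by
  obtain ⟨i, j, hi, hj, hin, hjn, hd⟩ := hk
  rcases Nat.eq_zero_or_pos k with h | h
  · omega
  · have h1 : k - 1 < k := by omega
    have := strictMono_fin_le hi (k-1) h1
    have := hin ⟨k-1, h1⟩
    omega

lemma bddAbove_matchSet (T : X → X) (δ : ℝ) (n : ℕ) (x z : X) :
    BddAbove (matchSet T δ n x z) :=
  ⟨n, fun _ hk => mem_matchSet_le hk⟩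

lemma maxFit_mem (T : X → X) (δ : ℝ) (n : ℕ) (x z : X) :
    maxFit T δ n x z ∈ matchSet T δ n x z :=
  Nat.sSup_mem ⟨0, zero_mem_matchSet T δ n x z⟩ (bddAbove_matchSet T δ n x z)

lemma le_maxFit {T : X → X} {δ : ℝ} {n k : ℕ} {x z : X}
    (hk : k ∈ matchSet T δ n x z) : k ≤ maxFit T δ n x z :=
  le_csSup (bddAbove_matchSet T δ n x z) hk

lemma maxFit_le (T : X → X) (δ : ℝ) (n : ℕ) (x z : X) :
    maxFit T δ n x z ≤ n :=
  mem_matchSet_le (maxFit_mem T δ n x z)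

lemma fbarN_nonneg (T : X → X) (δ : ℝ) (n : ℕ) (x z : X) :
    0 ≤ fbarN T δ n x z := by
  have h := maxFit_le T δ n x z
  unfold fbarN
  rcases Nat.eq_zero_or_pos n with h0 | h0
  · simp [h0]
  · have : (maxFit T δ n x z : ℝ) / n ≤ 1 := by
      rw [div_le_one (by exact_mod_cast h0)]
      exact_mod_cast h
    linarith

lemma fbarN_le_one (T : X → X) (δ : ℝ) (n : ℕ) (x z : X) :
    fbarN T δ n x z ≤ 1 := by
  unfold fbarN
  have : (0:ℝ) ≤ (maxFit T δ n x z : ℝ) / n := by positivity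
  linarith

lemma fbar_bddAbove (T : X → X) (δ : ℝ) (x z : X) :
    IsBoundedUnder (· ≤ ·) atTop (fun n => fbarN T δ n x z) :=
  ⟨1, eventually_map.mpr (Eventually.of_forall fun n : ℕ => fbarN_le_one T δ n x z)⟩

lemma fbar_cobdd (T : X → X) (δ : ℝ) (x z : X) :
    IsCoboundedUnder (· ≤ ·) atTop (fun n : ℕ => fbarN T δ n x z) :=
  isCoboundedUnder_le_of_le _ (fun n => fbarN_nonneg T δ n x z)

lemma fbar_nonneg (T : X → X) (δ : ℝ) (x z : X) : 0 ≤ fbar T δ x z :=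
  le_limsup_of_frequently_le
    (Eventually.frequently (Eventually.of_forall fun n => fbarN_nonneg T δ n x z))
    (fbar_bddAbove T δ x z)

/-- In a compact space, large `δ` belongs to the defining set of `rhoFK`. -/
lemma fkset_nonempty [CompactSpace X] (T : X → X) (x z : X) :
    ∃ δ : ℝ, 0 < δ ∧ fbar T δ x z < δ := by
  obtain ⟨C, hC⟩ := (isCompact_univ (X := X)).isBounded.subset_closedBall x
  set δ : ℝ := 2*C + dist x z + 1 with hδdef
  have hCpos : 0 ≤ C := by
    have := hC (mem_univ x); simp [Metric.mem_closedBall] at this; linarith [this]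
  have hδpos : 0 < δ := by positivity
  refine ⟨δ, hδpos, ?_⟩
  have hmem : ∀ n : ℕ, n ∈ matchSet T δ n x z := by
    intro n
    refine ⟨Fin.val, Fin.val, fun a b h => h, fun a b h => h,
      fun s => s.isLt, fun s => s.isLt, fun s => ?_⟩
    have h1 := hC (mem_univ (T^[(s:ℕ)] x))
    have h2 := hC (mem_univ (T^[(s:ℕ)] z))
    simp [Metric.mem_closedBall] at h1 h2
    calc dist (T^[(s:ℕ)] x) (T^[(s:ℕ)] z)
        ≤ dist (T^[(s:ℕ)] x) x + dist x (T^[(s:ℕ)] z) := dist_triangle _ _ _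
      _ ≤ C + C := by rw [dist_comm x]; linarith
      _ < δ := by rw [hδdef]; linarith [dist_nonneg (x := x) (y := z)]
  have hev : ∀ᶠ n : ℕ in atTop, fbarN T δ n x z ≤ 0 := by
    filter_upwards [eventually_ge_atTop 1] with n hn
    have h1 : n ≤ maxFit T δ n x z := le_maxFit (hmem n)
    have h2 := maxFit_le T δ n x z
    have : maxFit T δ n x z = n := le_antisymm h2 h1
    unfold fbarN
    rw [this, div_self (Nat.cast_ne_zero.mpr (by omega))]
    norm_num
  calc fbar T δ x z ≤ 0 := limsup_le_of_le (fbar_cobdd T δ x z) hev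
    _ < δ := hδpos

lemma rho_small {T : X → X} {x z : X} (hrho : rhoFK T x z = 0)
    (hne : ∃ δ : ℝ, 0 < δ ∧ fbar T δ x z < δ) {η : ℝ} (hη : 0 < η) :
    ∃ δ : ℝ, 0 < δ ∧ δ < η ∧ fbar T δ x z < δ := by
  have hlt : sInf {δ : ℝ | 0 < δ ∧ fbar T δ x z < δ} < η := by
    rw [show sInf {δ : ℝ | 0 < δ ∧ fbar T δ x z < δ} = rhoFK T x z from rfl, hrho]; exact hη
  obtain ⟨δ, hδmem, hδlt⟩ := exists_lt_of_csInf_lt hne hlt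
  exact ⟨δ, hδmem.1, hδlt, hδmem.2⟩


variable {Y : Type*} [MetricSpace Y]

/-- Birkhoff average. -/
noncomputable def birk (S : Y → Y) (g : Y → ℝ) (n : ℕ) (y : Y) : ℝ :=
  (∑ k ∈ Finset.range n, g (S^[k] y)) / n

lemma birk_mem_Icc {g : Y → ℝ} (hg01 : ∀ y, g y ∈ Icc (0:ℝ) 1) (S : Y → Y)
    (n : ℕ) (y : Y) : birk S g n y ∈ Icc (0:ℝ) 1 := by
  rcases Nat.eq_zero_or_pos n with h | h
  · simp [birk, h]
  constructor
  · apply div_nonneg _ (Nat.cast_nonneg n)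
    exact Finset.sum_nonneg fun k _ => (hg01 _).1
  · rw [birk, div_le_one (by exact_mod_cast h : (0:ℝ) < n)]
    calc ∑ k ∈ Finset.range n, g (S^[k] y) ≤ ∑ k ∈ Finset.range n, 1 :=
          Finset.sum_le_sum fun k _ => (hg01 _).2
      _ = (n : ℝ) := by simp

lemma sum_orbit_approx {g : Y → ℝ} (hg01 : ∀ y, g y ∈ Icc (0:ℝ) 1) (S : Y → Y)
    (y : Y) {n k : ℕ} {i : Fin k → ℕ} (hi : StrictMono i) (hin : ∀ s, i s < n) :
    |(∑ t ∈ Finset.range n, g (S^[t] y)) - ∑ s : Fin k, g (S^[i s] y)| ≤ (n : ℝ) - k := by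
  classical
  set D : Finset ℕ := Finset.image i Finset.univ with hD
  have hDsub : D ⊆ Finset.range n := by
    intro t ht
    simp only [hD, Finset.mem_image] at ht
    obtain ⟨s, _, rfl⟩ := ht
    exact Finset.mem_range.mpr (hin s)
  have hcard : D.card = k := by
    rw [hD, Finset.card_image_of_injective _ hi.injective, Finset.card_univ, Fintype.card_fin]
  have hsum : ∑ s : Fin k, g (S^[i s] y) = ∑ t ∈ D, g (S^[t] y) := by
    rw [hD, Finset.sum_image (fun a _ b _ h => hi.injective h)]
  have hsplit : (∑ t ∈ Finset.range n, g (S^[t] y)) - ∑ t ∈ D, g (S^[t] y)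
      = ∑ t ∈ Finset.range n \ D, g (S^[t] y) := (Finset.sum_sdiff_eq_sub hDsub).symm
  rw [hsum, hsplit]
  have hcard2 : (Finset.range n \ D).card = n - k := by
    rw [Finset.card_sdiff_of_subset hDsub, Finset.card_range, hcard]
  have hkn : k ≤ n := by
    rw [← hcard, ← Finset.card_range n]; exact Finset.card_le_card hDsub
  calc |∑ t ∈ Finset.range n \ D, g (S^[t] y)|
      ≤ ∑ t ∈ Finset.range n \ D, |g (S^[t] y)| := Finset.abs_sum_le_sum_abs _ _
    _ ≤ ∑ t ∈ Finset.range n \ D, 1 := by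
        refine Finset.sum_le_sum fun t _ => ?_
        rw [abs_le]; exact ⟨by linarith [(hg01 (S^[t] y)).1], (hg01 _).2⟩
    _ = ((n - k : ℕ) : ℝ) := by rw [Finset.sum_const, hcard2]; simp
    _ = (n : ℝ) - k := by rw [Nat.cast_sub hkn]

variable [CompactSpace Y]

lemma birk_diff_tendsto (S : Y → Y) {g : Y → ℝ} (hg : Continuous g)
    (hg01 : ∀ y, g y ∈ Icc (0:ℝ) 1) {a b : Y} (hFK : rhoFK S a b = 0) :
    Tendsto (fun n => birk S g n a - birk S g n b) atTop (𝓝 0) := by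
  rw [Metric.tendsto_atTop]
  intro ε hε
  -- uniform continuity
  have hgu : UniformContinuous g := CompactSpace.uniformContinuous_of_continuous hg
  obtain ⟨δ₁, hδ₁pos, hδ₁⟩ := Metric.uniformContinuous_iff.mp hgu (ε/4) (by linarith)
  obtain ⟨δ, hδpos, hδlt, hδfbar⟩ := rho_small hFK (fkset_nonempty S a b)
    (lt_min hδ₁pos (by linarith : (0:ℝ) < ε/8))
  have hδ1 : δ < δ₁ := hδlt.trans_le (min_le_left _ _)
  have hδε : δ < ε/8 := hδlt.trans_le (min_le_right _ _)
  have hev : ∀ᶠ n : ℕ in atTop, fbarN S δ n a b < δ :=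
    eventually_lt_of_limsup_lt hδfbar (fbar_bddAbove S δ a b)
  rw [eventually_atTop] at hev
  obtain ⟨N, hN⟩ := hev
  refine ⟨max N 1, fun n hn => ?_⟩
  have hn1 : 1 ≤ n := le_of_max_le_right hn
  have hnN : N ≤ n := le_of_max_le_left hn
  have hnpos : (0:ℝ) < n := by exact_mod_cast hn1
  set k := maxFit S δ n a b with hk
  obtain ⟨i, j, hi, hj, hin, hjn, hd⟩ := maxFit_mem S δ n a b
  have hkn : k ≤ n := maxFit_le S δ n a b
  have hkbig : (1 - δ) * n < (k : ℝ) := by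
    have := hN n hnN
    unfold fbarN at this
    have h2 : 1 - δ < (k:ℝ)/n := by linarith
    calc (1-δ)*n < ((k:ℝ)/n)*n := by exact mul_lt_mul_of_pos_right h2 hnpos
      _ = (k:ℝ) := by field_simp
  -- sum estimates
  have hA := sum_orbit_approx hg01 S a hi hin
  have hB := sum_orbit_approx hg01 S b hj hjn
  have hmid : |∑ s : Fin k, g (S^[i s] a) - ∑ s : Fin k, g (S^[j s] b)| ≤ (k:ℝ) * (ε/4) := by
    rw [← Finset.sum_sub_distrib]
    calc |∑ s : Fin k, (g (S^[i s] a) - g (S^[j s] b))|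
        ≤ ∑ s : Fin k, |g (S^[i s] a) - g (S^[j s] b)| := Finset.abs_sum_le_sum_abs _ _
      _ ≤ ∑ _s : Fin k, (ε/4) := by
          refine Finset.sum_le_sum fun s _ => ?_
          have := hδ₁ ((hd s).trans hδ1)
          rw [Real.dist_eq] at this
          linarith
      _ = (k:ℝ) * (ε/4) := by rw [Finset.sum_const]; simp [mul_comm]
  have htot : |(∑ t ∈ Finset.range n, g (S^[t] a)) - ∑ t ∈ Finset.range n, g (S^[t] b)|
      ≤ 2 * ((n:ℝ) - k) + (k:ℝ) * (ε/4) := by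
    have := abs_sub_abs_le_abs_sub (0:ℝ) (0:ℝ)  -- dummy
    calc |(∑ t ∈ Finset.range n, g (S^[t] a)) - ∑ t ∈ Finset.range n, g (S^[t] b)|
        = |((∑ t ∈ Finset.range n, g (S^[t] a)) - ∑ s : Fin k, g (S^[i s] a))
            + ((∑ s : Fin k, g (S^[i s] a)) - ∑ s : Fin k, g (S^[j s] b))
            + ((∑ s : Fin k, g (S^[j s] b)) - ∑ t ∈ Finset.range n, g (S^[t] b))| := by
          ring_nf
      _ ≤ |(∑ t ∈ Finset.range n, g (S^[t] a)) - ∑ s : Fin k, g (S^[i s] a)|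
            + |(∑ s : Fin k, g (S^[i s] a)) - ∑ s : Fin k, g (S^[j s] b)|
            + |(∑ s : Fin k, g (S^[j s] b)) - ∑ t ∈ Finset.range n, g (S^[t] b)| :=
          (abs_add_three _ _ _)
      _ ≤ ((n:ℝ) - k) + (k:ℝ)*(ε/4) + ((n:ℝ) - k) := by
          have hB' : |(∑ s : Fin k, g (S^[j s] b)) - ∑ t ∈ Finset.range n, g (S^[t] b)|
              ≤ (n:ℝ) - k := by rw [abs_sub_comm]; exact hB
          gcongr
      _ = 2 * ((n:ℝ) - k) + (k:ℝ) * (ε/4) := by ring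
  have hnk : (n:ℝ) - k < δ * n := by nlinarith
  rw [Real.dist_eq, sub_zero]
  unfold birk
  rw [div_sub_div_same, abs_div, abs_of_pos hnpos]
  rw [div_lt_iff₀ hnpos]
  have hkle : (k:ℝ) ≤ n := by exact_mod_cast hkn
  calc |(∑ t ∈ Finset.range n, g (S^[t] a)) - ∑ t ∈ Finset.range n, g (S^[t] b)|
      ≤ 2 * ((n:ℝ) - k) + (k:ℝ) * (ε/4) := htot
    _ < 2 * (δ * n) + (n:ℝ) * (ε/4) := by
        have h1 : 2 * ((n:ℝ) - k) < 2 * (δ * n) := by linarith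
        have h2 : (k:ℝ) * (ε/4) ≤ (n:ℝ) * (ε/4) := by nlinarith
        linarith
    _ ≤ 2 * ((ε/8) * n) + (n:ℝ) * (ε/4) := by nlinarith
    _ = ε/2 * n := by ring
    _ < ε * n := by nlinarith

end FKAux

namespace Part2
open FKAux FKPaper
variable {Y : Type*} [MetricSpace Y] [CompactSpace Y] [MeasurableSpace Y] [BorelSpace Y]

lemma cont_integrable (ν : Measure Y) [IsFiniteMeasure ν] {f : Y → ℝ}
    (hf : Continuous f) : Integrable f ν := by
  rw [← integrableOn_univ]
  exact hf.continuousOn.integrableOn_compact isCompact_univ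

lemma birk_continuous {S : Y → Y} (hS : Continuous S) {g : Y → ℝ} (hg : Continuous g)
    (n : ℕ) : Continuous (birk S g n) := by
  unfold birk
  exact (continuous_finset_sum _ fun k _ => hg.comp (hS.iterate k)).div_const _

lemma integral_comp_iterate {S : Y → Y} (hS : Continuous S) (ν : Measure Y)
    (hmap : ν.map S = ν) {g : Y → ℝ} (hg : Continuous g) (m : ℕ) :
    ∫ y, g (S^[m] y) ∂ν = ∫ y, g y ∂ν := by
  have hMP : MeasurePreserving (S^[m]) ν ν := (MeasurePreserving.iterate ⟨hS.measurable, hmap⟩ m)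
  conv_rhs => rw [← hMP.map_eq]
  rw [integral_map hMP.measurable.aemeasurable]
  exact (hg.aestronglyMeasurable)

lemma integral_birk {S : Y → Y} (hS : Continuous S) (ν : Measure Y)
    [IsProbabilityMeasure ν] (hmap : ν.map S = ν) {g : Y → ℝ} (hg : Continuous g)
    {n : ℕ} (hn : 1 ≤ n) :
    ∫ y, birk S g n y ∂ν = ∫ y, g y ∂ν := by
  unfold birk
  rw [integral_div]
  have hint : ∀ m ∈ Finset.range n, Integrable (fun y => g (S^[m] y)) ν :=
    fun m _ => cont_integrable ν (hg.comp (hS.iterate m))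
  rw [integral_finset_sum _ hint]
  have : ∀ m ∈ Finset.range n, ∫ y, g (S^[m] y) ∂ν = ∫ y, g y ∂ν :=
    fun m _ => integral_comp_iterate hS ν hmap hg m
  rw [Finset.sum_congr rfl this, Finset.sum_const, Finset.card_range]
  rw [nsmul_eq_mul]
  field_simp

/-- Every point's Birkhoff averages have liminf at least the integral. -/
lemma integral_le_liminf_birk {S : Y → Y} (hS : Continuous S)
    (hY : ∀ a b : Y, rhoFK S a b = 0) (ν : Measure Y) [IsProbabilityMeasure ν]
    (hmap : ν.map S = ν) {g : Y → ℝ} (hg : Continuous g)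
    (hg01 : ∀ y, g y ∈ Icc (0:ℝ) 1) (y : Y) :
    ∫ w, g w ∂ν ≤ liminf (fun n => birk S g n y) atTop := by
  set I := ∫ w, g w ∂ν with hI
  by_contra hcon
  push_neg at hcon
  -- frequently below r < I
  obtain ⟨r, hr1, hr2⟩ := exists_between hcon
  have hfreq : ∃ᶠ n in atTop, birk S g n y < r :=
    frequently_lt_of_liminf_lt
      (isCoboundedUnder_ge_of_le _ (fun n => (birk_mem_Icc hg01 S n y).2)) hr1
  obtain ⟨u, hu_mono, hu⟩ := extraction_of_frequently_atTop hfreq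
  -- subsequence converging to some c ≤ r
  obtain ⟨c, hcIcc, v, hv_mono, hv⟩ := (isCompact_Icc (a := (0:ℝ)) (b := 1)).tendsto_subseq
    (x := fun m => birk S g (u m) y) (fun m => birk_mem_Icc hg01 S (u m) y)
  set θ : ℕ → ℕ := u ∘ v with hθ
  have hθ_mono : StrictMono θ := hu_mono.comp hv_mono
  have hcr : c ≤ r := le_of_tendsto hv (Eventually.of_forall fun m => (hu (v m)).le)
  -- every point's averages along θ converge to c
  have hall : ∀ w : Y, Tendsto (fun m => birk S g (θ m) w) atTop (𝓝 c) := by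
    intro w
    have hdiff : Tendsto (fun m => birk S g (θ m) w - birk S g (θ m) y) atTop (𝓝 0) :=
      (birk_diff_tendsto S hg hg01 (hY w y)).comp hθ_mono.tendsto_atTop
    have : Tendsto (fun m => (birk S g (θ m) w - birk S g (θ m) y) + birk S g (θ m) y)
        atTop (𝓝 (0 + c)) := hdiff.add hv
    simpa using this
  -- dominated convergence
  have hDCT : Tendsto (fun m => ∫ w, birk S g (θ m) w ∂ν) atTop (𝓝 (∫ _, c ∂ν)) := by
    refine tendsto_integral_of_dominated_convergence (fun _ => 1)
      (fun m => (birk_continuous hS hg (θ m)).aestronglyMeasurable)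
      (integrable_const 1) (fun m => ?_) ?_
    · refine Eventually.of_forall fun w => ?_
      have h1 := birk_mem_Icc hg01 S (θ m) w
      show ‖birk S g (θ m) w‖ ≤ 1
      rw [Real.norm_eq_abs, abs_le]
      exact ⟨by linarith [h1.1], h1.2⟩
    · exact Eventually.of_forall fun w => hall w
  have hconst : (∫ _, c ∂ν) = c := by simp
  have hIc : Tendsto (fun m => ∫ w, birk S g (θ m) w ∂ν) atTop (𝓝 I) := by
    have heq : ∀ᶠ m in atTop, (fun _ => I) m = ∫ w, birk S g (θ m) w ∂ν := by
      filter_upwards [eventually_ge_atTop 1] with m hm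
      exact (integral_birk hS ν hmap hg (le_trans hm (hθ_mono.le_apply))).symm
    exact Tendsto.congr' heq tendsto_const_nhds
  have : I = c := tendsto_nhds_unique hIc (hconst ▸ hDCT)
  linarith

end Part2

section Part3
variable {X Y : Type*} [MetricSpace X] [CompactSpace X]
  [MetricSpace Y] [MeasurableSpace Y] [BorelSpace Y]

lemma conj_iterate {T : X → X} {S : Y → Y} {φ : X → Y}
    (hconj : ∀ x : X, φ (T x) = S (φ x)) (m : ℕ) (x : X) :
    φ (T^[m] x) = S^[m] (φ x) := by
  induction m with
  | zero => simp
  | succ m ih =>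
    rw [Function.iterate_succ_apply', Function.iterate_succ_apply', hconj, ih]

lemma singletonFibers_measurable {φ : X → Y} (hφc : Continuous φ)
    (hφs : Function.Surjective φ) :
    MeasurableSet {y : Y | ∃! x : X, φ x = y} := by
  have hGc : {y : Y | ∃! x : X, φ x = y}ᶜ
      = ⋃ m : ℕ, (fun p : X × X => φ p.1) ''
        {p : X × X | 1/(m+1 : ℝ) ≤ dist p.1 p.2 ∧ φ p.1 = φ p.2} := by
    ext y
    simp only [mem_compl_iff, mem_setOf_eq, mem_iUnion, mem_image]
    constructor
    · intro hy
      obtain ⟨x, hx⟩ := hφs y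
      have : ∃ x' : X, φ x' = y ∧ x' ≠ x := by
        by_contra hc
        push_neg at hc
        exact hy ⟨x, hx, fun x' hx' => hc x' hx'⟩
      obtain ⟨x', hx', hne⟩ := this
      have hd : 0 < dist x x' := dist_pos.mpr (Ne.symm hne)
      obtain ⟨m, hm⟩ := exists_nat_one_div_lt hd
      exact ⟨m, ⟨x, x'⟩, ⟨hm.le, by rw [hx, hx']⟩, hx⟩
    · rintro ⟨m, ⟨p, q⟩, ⟨hd, he⟩, hy⟩
      simp only at hd he hy
      intro huniq
      have h1 : p = q := by
        rw [huniq.unique hy (by rw [← he, hy])]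
      rw [h1] at hd
      simp at hd
      have : (0:ℝ) < 1/(m+1:ℝ) := by positivity
      linarith
  rw [← compl_compl {y : Y | ∃! x : X, φ x = y}, hGc]
  refine (MeasurableSet.iUnion fun m => ?_).compl
  refine IsCompact.measurableSet (IsCompact.image ?_ (hφc.comp continuous_fst))
  refine IsClosed.isCompact ?_
  rw [setOf_and]
  exact IsClosed.inter
    (isClosed_le continuous_const (continuous_fst.dist continuous_snd))
    (isClosed_eq (hφc.comp continuous_fst) (hφc.comp continuous_snd))

lemma fiber_dist {φ : X → Y} (hφc : Continuous φ) {K : Set Y} (hK : IsClosed K)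
    (hKG : K ⊆ {y : Y | ∃! x : X, φ x = y}) {ε : ℝ} (hε : 0 < ε) :
    ∃ δ₀ > 0, ∀ y ∈ K, ∀ p q : X,
      dist (φ p) y < δ₀ → dist (φ q) y < δ₀ → dist p q < ε := by
  by_contra hc
  push_neg at hc
  have hc' : ∀ m : ℕ, ∃ y ∈ K, ∃ p q : X,
      dist (φ p) y < 1/(m+1:ℝ) ∧ dist (φ q) y < 1/(m+1:ℝ) ∧ ε ≤ dist p q := by
    intro m
    obtain ⟨y, hy, p, q, h1, h2, h3⟩ := hc (1/(m+1:ℝ)) (by positivity)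
    exact ⟨y, hy, p, q, h1, h2, h3⟩
  choose y hyK p q h1 h2 h3 using hc'
  obtain ⟨⟨P, Q⟩, -, u, hu_mono, hu⟩ :=
    (isCompact_univ (X := X × X)).tendsto_subseq
      (x := fun m => ((p m, q m) : X × X)) (fun m => mem_univ _)
  have hP : Tendsto (fun m => p (u m)) atTop (𝓝 P) :=
    (continuous_fst.tendsto _).comp hu
  have hQ : Tendsto (fun m => q (u m)) atTop (𝓝 Q) :=
    (continuous_snd.tendsto _).comp hu
  have hinv : Tendsto (fun m => 1/((u m : ℝ)+1)) atTop (𝓝 0) := by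
    have hle : ∀ m : ℕ, 1/((u m : ℝ)+1) ≤ 1/((m:ℝ)+1) := by
      intro m
      gcongr
      exact_mod_cast hu_mono.le_apply
    exact squeeze_zero (fun m => by positivity) hle tendsto_one_div_add_atTop_nhds_zero_nat
  have hyP : Tendsto (fun m => y (u m)) atTop (𝓝 (φ P)) := by
    rw [tendsto_iff_dist_tendsto_zero]
    refine squeeze_zero (fun m => dist_nonneg)
      (g := fun m => 1/((u m : ℝ)+1) + dist (φ (p (u m))) (φ P)) (fun m => ?_) ?_
    · calc dist (y (u m)) (φ P) ≤ dist (y (u m)) (φ (p (u m))) + dist (φ (p (u m))) (φ P) :=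
            dist_triangle _ _ _
        _ ≤ 1/((u m : ℝ)+1) + dist (φ (p (u m))) (φ P) := by
            have := h1 (u m)
            rw [dist_comm]
            push_cast
            linarith
    · have : Tendsto (fun m => dist (φ (p (u m))) (φ P)) atTop (𝓝 0) :=
        tendsto_iff_dist_tendsto_zero.mp ((hφc.tendsto P).comp hP)
      simpa using hinv.add this
  have hyQ : Tendsto (fun m => y (u m)) atTop (𝓝 (φ Q)) := by
    rw [tendsto_iff_dist_tendsto_zero]
    refine squeeze_zero (fun m => dist_nonneg)
      (g := fun m => 1/((u m : ℝ)+1) + dist (φ (q (u m))) (φ Q)) (fun m => ?_) ?_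
    · calc dist (y (u m)) (φ Q) ≤ dist (y (u m)) (φ (q (u m))) + dist (φ (q (u m))) (φ Q) :=
            dist_triangle _ _ _
        _ ≤ 1/((u m : ℝ)+1) + dist (φ (q (u m))) (φ Q) := by
            have := h2 (u m)
            rw [dist_comm]
            push_cast
            linarith
    · have : Tendsto (fun m => dist (φ (q (u m))) (φ Q)) atTop (𝓝 0) :=
        tendsto_iff_dist_tendsto_zero.mp ((hφc.tendsto Q).comp hQ)
      simpa using hinv.add this
  have hPK : φ P ∈ K := hK.mem_of_tendsto hyP (Eventually.of_forall fun m => hyK (u m))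
  have hPQ : φ Q = φ P := tendsto_nhds_unique hyQ hyP
  obtain ⟨x₀, -, huniq⟩ := hKG hPK
  have hPQ' : P = Q := by
    rw [huniq P rfl, huniq Q hPQ]
  have hdist : ε ≤ dist P Q :=
    ge_of_tendsto (hP.dist hQ) (Eventually.of_forall fun m => h3 (u m))
  rw [hPQ'] at hdist
  simp at hdist
  linarith

end Part3

open FKPaper Filter Topology MeasureTheory Set
open scoped ENNReal NNReal

/-- every regular extension of a topologically loosely Kronecker TDS is
topologically loosely Kronecker. -/
theorem topologically_loosely_Kronecker_of_regular_extension
    {X Y : Type*} [MetricSpace X] [CompactSpace X] [Nonempty X]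
    [MetricSpace Y] [CompactSpace Y] [Nonempty Y] [MeasurableSpace Y] [BorelSpace Y]
    (T : X → X) (S : Y → Y) (hT : Continuous T) (hS : Continuous S)
    (hY : ∀ a b : Y, rhoFK S a b = 0)
    (ν : Measure Y) [IsProbabilityMeasure ν]
    (hνinv : ∀ A : Set Y, MeasurableSet A → ν (S ⁻¹' A) = ν A)
    (φ : X → Y) (hφc : Continuous φ) (hφs : Function.Surjective φ)
    (hconj : ∀ x : X, φ (T x) = S (φ x))
    (hreg : ν {y : Y | ∃! x : X, φ x = y} = 1) :
    ∀ x y : X, rhoFK T x y = 0 := by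
  intro x z
  have hmap : ν.map S = ν := by
    refine Measure.ext fun A hA => ?_
    rw [Measure.map_apply hS.measurable hA]
    exact hνinv A hA
  have key : ∀ ε : ℝ, 0 < ε → fbar T ε x z < ε := by
    intro ε hε
    set a := φ x with ha
    set b := φ z with hb
    -- a closed set of uniqueness points with large measure
    have hGmeas := singletonFibers_measurable hφc hφs
    have hε8 : ENNReal.ofReal (ε/8) ≠ 0 := by
      simp only [ne_eq, ENNReal.ofReal_eq_zero, not_le]
      positivity
    obtain ⟨K, hKsub, hKclosed, hKlt⟩ :=
      hGmeas.exists_isClosed_lt_add (measure_ne_top ν _) hε8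
    -- measure of K
    have hKtoReal : 1 - ε/8 ≤ (ν K).toReal := by
      have h1 : (1 : ℝ≥0∞) ≤ ν K + ENNReal.ofReal (ε/8) := by
        rw [← hreg]; exact hKlt.le
      have hfin : ν K ≠ ∞ := measure_ne_top ν K
      have h2 : (1:ℝ) ≤ (ν K).toReal + ε/8 := by
        have := ENNReal.toReal_mono
          (by finiteness : ν K + ENNReal.ofReal (ε/8) ≠ ∞) h1
        rwa [ENNReal.toReal_add hfin (by finiteness), ENNReal.toReal_one,
          ENNReal.toReal_ofReal (by positivity)] at this
      linarith
    -- fiber continuity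
    obtain ⟨δ₀, hδ₀pos, hδ₀⟩ := fiber_dist hφc hKclosed hKsub hε
    -- Urysohn function
    set U := Metric.thickening (δ₀/2) K with hU
    have hUopen : IsOpen U := Metric.isOpen_thickening
    have hKU : K ⊆ U := Metric.self_subset_thickening (by positivity) K
    obtain ⟨g, hg0, hg1, hg01⟩ := exists_continuous_zero_one_of_isClosed
      hUopen.isClosed_compl hKclosed
      (Set.disjoint_left.mpr fun y hyUc hyK => hyUc (hKU hyK))
    have hg01' : ∀ y, g y ∈ Icc (0:ℝ) 1 := hg01
    -- integral bound
    have hgint : Integrable (fun y => g y) ν :=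
      Part2.cont_integrable ν g.continuous
    have hIg : 1 - ε/8 ≤ ∫ w, g w ∂ν := by
      have h1 : ∫ w in K, g w ∂ν ≤ ∫ w, g w ∂ν :=
        setIntegral_le_integral hgint
          (Eventually.of_forall fun w => (hg01' w).1)
      have h2 : ∫ w in K, g w ∂ν = (ν K).toReal := by
        rw [setIntegral_congr_fun hKclosed.measurableSet
          (fun w hw => hg1 hw)]
        simp [setIntegral_const]
        rfl
      linarith [hKtoReal]
    -- frequency of visits of the orbit of a to U
    have hliminf : 1 - ε/8 ≤ liminf (fun n => FKAux.birk S g n a) atTop :=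
      le_trans hIg
        (Part2.integral_le_liminf_birk hS hY ν hmap g.continuous hg01' a)
    have hfreq : ∀ᶠ n : ℕ in atTop, 1 - ε/4 < FKAux.birk S g n a :=
      eventually_lt_of_lt_liminf (by linarith)
        ⟨0, eventually_map.mpr (Eventually.of_forall fun n =>
          (FKAux.birk_mem_Icc hg01' S n a).1)⟩
    -- a small δ for the Y-match
    obtain ⟨δ, hδpos, hδlt, hδfbar⟩ := FKAux.rho_small (hY a b)
      (FKAux.fkset_nonempty S a b)
      (lt_min (by positivity : (0:ℝ) < δ₀/2) (by positivity : (0:ℝ) < ε/4))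
    have hδd : δ < δ₀/2 := hδlt.trans_le (min_le_left _ _)
    have hδe : δ < ε/4 := hδlt.trans_le (min_le_right _ _)
    have hevfb : ∀ᶠ n : ℕ in atTop, fbarN S δ n a b < δ :=
      eventually_lt_of_limsup_lt hδfbar (FKAux.fbar_bddAbove S δ a b)
    -- the key estimate, for all large n
    have hkey : ∀ᶠ n : ℕ in atTop, fbarN T ε n x z ≤ ε/2 := by
      filter_upwards [hfreq, hevfb, eventually_ge_atTop 1] with n hfr hfb hn1
      classical
      have hnpos : (0:ℝ) < n := by exact_mod_cast hn1
      set k := maxFit S δ n a b with hk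
      obtain ⟨i, j, hi, hj, hin, hjn, hd⟩ := FKAux.maxFit_mem S δ n a b
      have hkn : k ≤ n := FKAux.maxFit_le S δ n a b
      have hkbig : (1 - δ) * n < (k : ℝ) := by
        unfold fbarN at hfb
        have h2 : 1 - δ < (k:ℝ)/n := by rw [hk]; linarith
        calc (1-δ)*n < ((k:ℝ)/n)*n := mul_lt_mul_of_pos_right h2 hnpos
          _ = (k:ℝ) := by field_simp
      -- good times for the orbit of a
      set GFin := (Finset.range n).filter (fun t => S^[t] a ∈ U) with hGFin
      have hsumcard : ∑ t ∈ Finset.range n, g (S^[t] a) ≤ (GFin.card : ℝ) := by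
        rw [← Finset.sum_filter_add_sum_filter_not (Finset.range n)
          (fun t => S^[t] a ∈ U) (fun t => g (S^[t] a))]
        have h1 : ∑ t ∈ (Finset.range n).filter (fun t => ¬ S^[t] a ∈ U),
            g (S^[t] a) = 0 :=
          Finset.sum_eq_zero fun t ht => hg0 (Finset.mem_filter.mp ht).2
        have h2 : ∑ t ∈ GFin, g (S^[t] a) ≤ (GFin.card : ℝ) := by
          calc ∑ t ∈ GFin, g (S^[t] a) ≤ ∑ _t ∈ GFin, (1:ℝ) :=
                Finset.sum_le_sum fun t _ => (hg01' _).2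
            _ = (GFin.card : ℝ) := by simp
        rw [h1, add_zero]
        exact h2
      have hGcard : (1 - ε/4) * n < (GFin.card : ℝ) := by
        have : (1 - ε/4) * n < ∑ t ∈ Finset.range n, g (S^[t] a) := by
          have := hfr
          unfold FKAux.birk at this
          rw [lt_div_iff₀ hnpos] at this
          linarith [this]
        linarith
      have hGsub : GFin ⊆ Finset.range n := Finset.filter_subset _ _
      have hGle : GFin.card ≤ n := by
        calc GFin.card ≤ (Finset.range n).card := Finset.card_le_card hGsub
          _ = n := Finset.card_range n
      -- matched times with good orbit position
      set A := Finset.univ.filter (fun s : Fin k => S^[i s] a ∈ U) with hA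
      have hbadcard : (Finset.univ.filter
          (fun s : Fin k => ¬ S^[i s] a ∈ U)).card ≤ n - GFin.card := by
        have : (Finset.univ.filter (fun s : Fin k => ¬ S^[i s] a ∈ U)).card
            ≤ (Finset.range n \ GFin).card := by
          refine Finset.card_le_card_of_injOn i ?_ ?_
          · intro s hs
            rw [Finset.mem_coe] at hs ⊢
            rw [Finset.mem_sdiff]
            refine ⟨Finset.mem_range.mpr (hin s), ?_⟩
            intro hmem
            exact (Finset.mem_filter.mp hs).2 (Finset.mem_filter.mp hmem).2
          · exact fun s _ t _ h => hi.injective h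
        rwa [Finset.card_sdiff_of_subset hGsub, Finset.card_range] at this
      have hAcard : k - (n - GFin.card) ≤ A.card := by
        have := Finset.card_filter_add_card_filter_not
          (s := (Finset.univ : Finset (Fin k)))
          (p := fun s : Fin k => S^[i s] a ∈ U)
        simp only [Finset.card_univ, Fintype.card_fin] at this
        rw [hA]
        omega
      have hAbig : (1 - ε/2) * n < (A.card : ℝ) := by
        have h1 : ((n : ℕ) : ℝ) - (GFin.card : ℝ) < (ε/4) * n := by
          linarith [hGcard]
        have h2 : (k : ℝ) - ((n:ℝ) - GFin.card) ≤ (A.card : ℝ) := by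
          have hGn : GFin.card ≤ n := hGle
          have := hAcard
          have hc1 : ((k - (n - GFin.card) : ℕ) : ℝ) ≤ (A.card : ℝ) := by
            exact_mod_cast this
          have hc2 : (k:ℝ) - ((n:ℝ) - (GFin.card:ℝ)) ≤ ((k - (n - GFin.card) : ℕ) : ℝ) := by
            rcases le_or_gt (n - GFin.card) k with hle | hlt
            · rw [Nat.cast_sub hle, Nat.cast_sub hGn]
            · have : k - (n - GFin.card) = 0 := by omega
              rw [this]
              have : (k : ℝ) ≤ (n:ℝ) - (GFin.card:ℝ) := by
                have : k ≤ n - GFin.card := hlt.le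
                have h3 : (k:ℝ) ≤ ((n - GFin.card : ℕ) : ℝ) := by exact_mod_cast this
                rwa [Nat.cast_sub hGn] at h3
              simp
              linarith
          linarith
        calc (1 - ε/2) * n = (1 - δ) * n - (ε/2 - δ) * n := by ring
          _ < (k:ℝ) - (ε/4) * n := by
              have : (ε/4) * n ≤ (ε/2 - δ) * n := by nlinarith
              linarith [hkbig]
          _ < (k:ℝ) - (((n:ℕ):ℝ) - (GFin.card:ℝ)) := by linarith
          _ ≤ (A.card : ℝ) := h2
      -- build the matched subfamily
      have hAmem : A.card ∈ FKAux.matchSet T ε n x z := by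
        set e := A.orderIsoOfFin rfl with he
        refine ⟨fun t => i (e t : Fin k), fun t => j (e t : Fin k), ?_, ?_, ?_, ?_, ?_⟩
        · exact hi.comp ((Subtype.strictMono_coe _).comp e.strictMono)
        · exact hj.comp ((Subtype.strictMono_coe _).comp e.strictMono)
        · exact fun t => hin _
        · exact fun t => hjn _
        · intro t
          set s : Fin k := (e t : Fin k) with hs
          have hsA : s ∈ A := (e t).2
          have hsU : S^[i s] a ∈ U := (Finset.mem_filter.mp hsA).2
          obtain ⟨κ, hκK, hκd⟩ := Metric.mem_thickening_iff.mp hsU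
          have hφx : φ (T^[i s] x) = S^[i s] a := by
            rw [conj_iterate hconj, ha]
          have hφz : φ (T^[j s] z) = S^[j s] b := by
            rw [conj_iterate hconj, hb]
          refine hδ₀ κ hκK (T^[i s] x) (T^[j s] z) ?_ ?_
          · rw [hφx]
            linarith [hκd]
          · rw [hφz]
            calc dist (S^[j s] b) κ ≤ dist (S^[j s] b) (S^[i s] a) + dist (S^[i s] a) κ :=
                  dist_triangle _ _ _
              _ < δ + δ₀/2 := by
                  rw [dist_comm]
                  linarith [hd s, hκd]
              _ ≤ δ₀ := by linarith
      have hAle : A.card ≤ maxFit T ε n x z := FKAux.le_maxFit hAmem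
      unfold fbarN
      have hdiv : 1 - ε/2 < (maxFit T ε n x z : ℝ) / n := by
        rw [lt_div_iff₀ hnpos]
        calc (1 - ε/2) * n < (A.card : ℝ) := hAbig
          _ ≤ (maxFit T ε n x z : ℝ) := by exact_mod_cast hAle
      linarith
    calc fbar T ε x z ≤ ε/2 := limsup_le_of_le (FKAux.fbar_cobdd T ε x z) hkey
      _ < ε := by linarith
  have h0le : (0:ℝ) ≤ rhoFK T x z :=
    Real.sInf_nonneg fun δ hδ => hδ.1.le
  have hle : ∀ ε : ℝ, 0 < ε → rhoFK T x z ≤ ε := fun ε hε =>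
    csInf_le ⟨0, fun δ hδ => hδ.1.le⟩ ⟨hε, key ε hε⟩
  by_contra hne
  have hpos : 0 < rhoFK T x z := lt_of_le_of_ne h0le (Ne.symm hne)
  have := hle (rhoFK T x z / 2) (by linarith)
  linarith
end
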